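/- Let α be a nonnegative random variable with distribution function F supported on [0,∞), survival function F̄ = 1 - F positive on [0,∞), and finite mean Eα. Suppose α is DGMRD (e(x) = m(x)/x is nonincreasing on (0,∞)) and let γ := lim_{x→∞} e(x). Then γ = 0 if and only if E[α^{β+1}] < ∞ for every β > 0. -/

import Mathlib

open MeasureTheory Set Filter Function Topology

noncomputable section

/-- The mean residual demand (MRD) function `m(x) = (1/F̄(x)) ∫_x^∞ F̄(u) du`. -/
def mrd (F : ℝ → ℝ) (x : ℝ) : ℝ :=
  (∫ u in Ioi x, (1 - F u)) / (1 - F x)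


variable {f : ℝ → ℝ} {x y : ℝ}

lemma aux_split (hi : IntegrableOn f (Ioi x)) (hxy : x ≤ y) :
    ∫ u in Ioi x, f u = (∫ u in Ioc x y, f u) + ∫ u in Ioi y, f u := by
  rw [← setIntegral_union (Ioc_disjoint_Ioi le_rfl) measurableSet_Ioi
      (hi.mono_set (Ioc_subset_Ioi_self.trans (by rfl)))
      (hi.mono_set (Ioi_subset_Ioi hxy)), Ioc_union_Ioi_eq_Ioi hxy]

lemma aux_Ioc_ge (hf : Antitone f) (hxy : x ≤ y) (hi : IntegrableOn f (Ioc x y)) :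
    (y - x) * f y ≤ ∫ u in Ioc x y, f u := by
  have h := setIntegral_mono_on (integrableOn_const measure_Ioc_lt_top.ne) hi
    measurableSet_Ioc (fun u hu => hf hu.2 : ∀ u ∈ Ioc x y, f y ≤ f u)
  simpa [Real.volume_Ioc, ENNReal.toReal_ofReal (sub_nonneg.2 hxy), max_eq_left (sub_nonneg.2 hxy), mul_comm] using h

lemma aux_Ioc_le (hf : Antitone f) (hxy : x ≤ y) (hi : IntegrableOn f (Ioc x y)) :
    (∫ u in Ioc x y, f u) ≤ (y - x) * f x := by
  have h := setIntegral_mono_on hi (integrableOn_const measure_Ioc_lt_top.ne)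
    measurableSet_Ioc (fun u hu => hf hu.1.le : ∀ u ∈ Ioc x y, f u ≤ f x)
  simpa [Real.volume_Ioc, ENNReal.toReal_ofReal (sub_nonneg.2 hxy), max_eq_left (sub_nonneg.2 hxy), mul_comm] using h

lemma aux_T_nonneg (hf : ∀ u, 0 ≤ f u) : 0 ≤ ∫ u in Ioi x, f u :=
  setIntegral_nonneg measurableSet_Ioi fun u _ => hf u

lemma aux_T_anti (hf : ∀ u, 0 ≤ f u) (hi : IntegrableOn f (Ioi x)) (hxy : x ≤ y) :
    (∫ u in Ioi y, f u) ≤ ∫ u in Ioi x, f u := by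
  rw [aux_split hi hxy]
  have : 0 ≤ ∫ u in Ioc x y, f u := setIntegral_nonneg measurableSet_Ioc fun u _ => hf u
  linarith
variable {f : ℝ → ℝ} {x y x₀ ε : ℝ}

lemma aux_step (hf : Antitone f) (hf0 : ∀ u, 0 ≤ f u)
    (hi : ∀ z, x₀ ≤ z → IntegrableOn f (Ioi z)) (hx₀ : 0 < x₀) (hε : 0 < ε)
    (h : ∀ z, x₀ ≤ z → (∫ u in Ioi z, f u) ≤ ε * z * f z) :
    ∀ z, x₀ ≤ z → (∫ u in Ioi (2*z), f u) ≤ (2*ε) * ∫ u in Ioi z, f u := by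
  intro z hz
  have hz0 : 0 < z := hx₀.trans_le hz
  have hzz : z ≤ 2*z := by linarith
  have hsplit := aux_split (hi z hz) hzz
  have hge := aux_Ioc_ge hf hzz ((hi z hz).mono_set Ioc_subset_Ioi_self)
  have hb := h (2*z) (by linarith)
  have h0 : 0 ≤ ∫ u in Ioi (2*z), f u := aux_T_nonneg hf0
  have hf2 : 0 ≤ f (2*z) := hf0 _
  nlinarith [hge, hsplit, hb, h0]

lemma aux_iter {k : ℕ} (hf : Antitone f) (hf0 : ∀ u, 0 ≤ f u)
    (hi : ∀ z, x₀ ≤ z → IntegrableOn f (Ioi z)) (hx₀ : 0 < x₀)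
    (hstep : ∀ z, x₀ ≤ z → (∫ u in Ioi (2*z), f u) ≤ (1/2)^k * ∫ u in Ioi z, f u) :
    ∀ n : ℕ, (∫ u in Ioi (2^n * x₀), f u) ≤ ((1/2)^k)^n * ∫ u in Ioi x₀, f u := by
  intro n
  induction n with
  | zero => simp
  | succ n ih =>
    have h1 : (1:ℝ) ≤ 2^n := one_le_pow₀ (by norm_num)
    have hge : x₀ ≤ 2^n * x₀ := le_mul_of_one_le_left hx₀.le h1
    have := hstep (2^n * x₀) hge
    have hk : (0:ℝ) ≤ (1/2)^k := by positivity
    calc (∫ u in Ioi (2^(n+1) * x₀), f u) = ∫ u in Ioi (2*(2^n * x₀)), f u := by ring_nf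
    _ ≤ (1/2)^k * ∫ u in Ioi (2^n * x₀), f u := this
    _ ≤ (1/2)^k * (((1/2)^k)^n * ∫ u in Ioi x₀, f u) := by
        exact mul_le_mul_of_nonneg_left ih hk
    _ = ((1/2)^k)^(n+1) * ∫ u in Ioi x₀, f u := by ring

lemma aux_decay {k : ℕ} (hf : Antitone f) (hf0 : ∀ u, 0 ≤ f u)
    (hi : ∀ z, x₀ ≤ z → IntegrableOn f (Ioi z)) (hx₀ : 0 < x₀)
    (hstep : ∀ z, x₀ ≤ z → (∫ u in Ioi (2*z), f u) ≤ (1/2)^k * ∫ u in Ioi z, f u) :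
    ∀ z, x₀ ≤ z → (∫ u in Ioi z, f u) ≤ (2*x₀/z)^k * ∫ u in Ioi x₀, f u := by
  intro z hz
  have hz0 : 0 < z := hx₀.trans_le hz
  have hr : (1:ℝ) ≤ z / x₀ := (one_le_div hx₀).2 hz
  set m : ℕ := ⌊z / x₀⌋₊ with hm
  have hm1 : 1 ≤ m := Nat.le_floor (by exact_mod_cast hr)
  set n : ℕ := Nat.log 2 m with hn
  have h2n : (2:ℝ)^n ≤ z / x₀ := by
    calc ((2:ℝ))^n = ((2^n : ℕ) : ℝ) := by push_cast; ring
    _ ≤ (m : ℝ) := by exact_mod_cast Nat.pow_log_le_self 2 (by omega)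
    _ ≤ z / x₀ := Nat.floor_le (by linarith)
  have h2n' : z / x₀ < 2^(n+1) := by
    have h1 : m < 2^(n+1) := Nat.lt_pow_succ_log_self (by norm_num) m
    have : z / x₀ < m + 1 := Nat.lt_floor_add_one _
    have h2 : (m:ℝ) + 1 ≤ 2^(n+1) := by exact_mod_cast Nat.succ_le_of_lt h1
    linarith
  have hle : 2^n * x₀ ≤ z := by
    rw [← le_div_iff₀ hx₀] at *; linarith
  have h1 := aux_T_anti (f := f) hf0 (hi _ (le_mul_of_one_le_left hx₀.le (one_le_pow₀ (by norm_num)))) hle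
  have h2 := aux_iter hf hf0 hi hx₀ hstep n
  have hpow : ((1:ℝ)/2)^n ≤ 2*x₀/z := by
    rw [div_pow, one_pow, div_le_div_iff₀ (by positivity) hz0]
    rw [div_lt_iff₀ hx₀] at h2n'
    rw [pow_succ] at h2n'
    nlinarith
  have hTnn : 0 ≤ ∫ u in Ioi x₀, f u := aux_T_nonneg hf0
  calc (∫ u in Ioi z, f u) ≤ ∫ u in Ioi (2^n * x₀), f u := h1
  _ ≤ ((1/2)^k)^n * ∫ u in Ioi x₀, f u := h2
  _ = (((1:ℝ)/2)^n)^k * ∫ u in Ioi x₀, f u := by rw [← pow_mul, ← pow_mul, Nat.mul_comm]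
  _ ≤ (2*x₀/z)^k * ∫ u in Ioi x₀, f u := by
      apply mul_le_mul_of_nonneg_right (pow_le_pow_left₀ (by positivity) hpow k) hTnn

lemma aux_fdecay {k : ℕ} (hf : Antitone f) (hf0 : ∀ u, 0 ≤ f u)
    (hi : ∀ z, x₀ ≤ z → IntegrableOn f (Ioi z)) (hx₀ : 0 < x₀)
    (hstep : ∀ z, x₀ ≤ z → (∫ u in Ioi (2*z), f u) ≤ (1/2)^k * ∫ u in Ioi z, f u) :
    ∀ z, 2*x₀ ≤ z → f z ≤ (2 * (4*x₀)^k * ∫ u in Ioi x₀, f u) / z^(k+1) := by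
  intro z hz
  have hz0 : 0 < z := by linarith
  have hhalf : x₀ ≤ z/2 := by linarith
  have hle : z/2 ≤ z := by linarith
  have hge := aux_Ioc_ge hf hle ((hi _ hhalf).mono_set Ioc_subset_Ioi_self)
  have hsplit := aux_split (hi _ hhalf) hle
  have hT0 : 0 ≤ ∫ u in Ioi z, f u := aux_T_nonneg hf0
  have hTd := aux_decay hf hf0 hi hx₀ hstep (z/2) hhalf
  -- (z/2) * f z ≤ T(z/2) ≤ (2x₀/(z/2))^k * T x₀ = (4x₀/z)^k T x₀
  have key : (z/2) * f z ≤ (2*x₀/(z/2))^k * ∫ u in Ioi x₀, f u := by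
    nlinarith [hge, hsplit, hTd]
  have heq : (2*x₀/(z/2)) = 4*x₀/z := by field_simp; ring
  rw [heq] at key
  have hTnn : 0 ≤ ∫ u in Ioi x₀, f u := aux_T_nonneg hf0
  rw [le_div_iff₀ (by positivity)]
  have hdp : (4*x₀/z)^k = (4*x₀)^k / z^k := div_pow _ _ _
  rw [hdp] at key
  have hzk : (0:ℝ) < z^k := by positivity
  have key2 : ((z/2) * f z) * z^k ≤ (4*x₀)^k * ∫ u in Ioi x₀, f u := by
    calc ((z/2) * f z) * z^k ≤ ((4*x₀)^k / z^k * ∫ u in Ioi x₀, f u) * z^k :=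
      mul_le_mul_of_nonneg_right key hzk.le
    _ = (4*x₀)^k * ∫ u in Ioi x₀, f u := by field_simp
  calc f z * z^(k+1) = ((z/2) * f z) * z^k * 2 := by ring
  _ ≤ ((4*x₀)^k * (∫ u in Ioi x₀, f u)) * 2 := by linarith
  _ = 2 * (4*x₀)^k * ∫ u in Ioi x₀, f u := by ring

lemma aux_lower {c : ℝ} (hc : 1 ≤ c)
    (hstep : ∀ z, 1 ≤ z → (∫ u in Ioi z, f u) ≤ 2 * ∫ u in Ioi (c*z), f u) :
    ∀ n : ℕ, (1/2)^n * (∫ u in Ioi (1:ℝ), f u) ≤ ∫ u in Ioi (c^n), f u := by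
  intro n
  induction n with
  | zero => simp
  | succ n ih =>
    have h1 : (1:ℝ) ≤ c^n := one_le_pow₀ hc
    have := hstep (c^n) h1
    have : ((1:ℝ)/2) * ∫ u in Ioi (c^n), f u ≤ ∫ u in Ioi (c * c^n), f u := by linarith
    calc ((1:ℝ)/2)^(n+1) * ∫ u in Ioi (1:ℝ), f u
        = (1/2) * ((1/2)^n * ∫ u in Ioi (1:ℝ), f u) := by ring
    _ ≤ (1/2) * ∫ u in Ioi (c^n), f u := by linarith [ih]
    _ ≤ ∫ u in Ioi (c * c^n), f u := this
    _ = ∫ u in Ioi (c^(n+1)), f u := by rw [pow_succ, mul_comm]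

lemma aux_moment {Ω : Type*} [MeasurableSpace Ω] (μ : Measure Ω) [IsProbabilityMeasure μ]
    (α : Ω → ℝ) (hαmeas : Measurable α) (hval : ∀ᵐ ω ∂μ, 0 ≤ α ω)
    (f : ℝ → ℝ) (hG : ∀ u, ENNReal.ofReal (f u) = μ {ω | u < α ω})
    {β C c : ℝ} {k : ℕ} (hβ : 0 < β) (hβk : β < k) (hc : 0 < c) (hC : 0 ≤ C)
    (hfb : ∀ t, c ≤ t → f t ≤ C / t^(k+1)) :
    Integrable (fun ω => α ω ^ (β + 1)) μ := by
  have hp : 0 < β + 1 := by linarith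
  have hgmeas : Measurable (fun ω => α ω ^ (β + 1)) :=
    (Real.continuous_rpow_const hp.le).measurable.comp hαmeas
  refine ⟨hgmeas.aestronglyMeasurable, ?_⟩
  rw [hasFiniteIntegral_iff_norm]
  have hae : ∀ᵐ ω ∂μ, ENNReal.ofReal ‖α ω ^ (β+1)‖ = ENNReal.ofReal (α ω ^ (β+1)) := by
    filter_upwards [hval] with ω hω
    rw [Real.norm_of_nonneg (Real.rpow_nonneg hω _)]
  rw [lintegral_congr_ae hae,
    lintegral_rpow_eq_lintegral_meas_lt_mul μ hval hαmeas.aemeasurable hp]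
  have hstep : (β + 1) - 1 = β := by ring
  rw [hstep]
  -- bound the inner integral
  have hsplit : (Ioi (0:ℝ)) = Ioc 0 c ∪ Ioi c := (Ioc_union_Ioi_eq_Ioi hc.le).symm
  rw [hsplit, lintegral_union measurableSet_Ioi (Ioc_disjoint_Ioi le_rfl)]
  have h1 : ∫⁻ t in Ioc (0:ℝ) c, μ {a | t < α a} * ENNReal.ofReal (t ^ β)
      ≤ ∫⁻ _t in Ioc (0:ℝ) c, ENNReal.ofReal (c ^ β) := by
    refine setLIntegral_mono' measurableSet_Ioc (fun t ht => ?_)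
    calc μ {a | t < α a} * ENNReal.ofReal (t ^ β) ≤ 1 * ENNReal.ofReal (c ^ β) := by
          exact mul_le_mul' prob_le_one
            (ENNReal.ofReal_le_ofReal (Real.rpow_le_rpow ht.1.le ht.2 hβ.le))
    _ = ENNReal.ofReal (c ^ β) := one_mul _
  have h1' : ∫⁻ _t in Ioc (0:ℝ) c, ENNReal.ofReal (c ^ β) < ⊤ := by
    rw [setLIntegral_const]
    exact ENNReal.mul_lt_top ENNReal.ofReal_lt_top measure_Ioc_lt_top
  have hint2 : IntegrableOn (fun t : ℝ => C * t ^ (β - (k+1 : ℕ))) (Ioi c) := by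
    exact (integrableOn_Ioi_rpow_of_lt (by push_cast; linarith) hc).const_mul C
  have h2 : ∫⁻ t in Ioi c, μ {a | t < α a} * ENNReal.ofReal (t ^ β)
      ≤ ∫⁻ t in Ioi c, ENNReal.ofReal (C * t ^ (β - (k+1 : ℕ))) := by
    refine setLIntegral_mono' measurableSet_Ioi (fun t ht => ?_)
    have ht0 : 0 < t := hc.trans ht
    have hft : ENNReal.ofReal (f t) ≤ ENNReal.ofReal (C / t^(k+1)) :=
      ENNReal.ofReal_le_ofReal (hfb t ht.le)
    calc μ {a | t < α a} * ENNReal.ofReal (t ^ β)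
        ≤ ENNReal.ofReal (C / t^(k+1)) * ENNReal.ofReal (t ^ β) := by
          rw [← hG]; exact mul_le_mul_of_nonneg_right hft (zero_le')
    _ = ENNReal.ofReal (C / t^(k+1) * t ^ β) := by
          rw [ENNReal.ofReal_mul (by positivity)]
    _ = ENNReal.ofReal (C * t ^ (β - (k+1 : ℕ))) := by
          congr 1
          rw [Real.rpow_sub ht0, ← Real.rpow_natCast t (k+1)]
          push_cast
          ring
  have h2' : ∫⁻ t in Ioi c, ENNReal.ofReal (C * t ^ (β - (k+1 : ℕ))) < ⊤ := by
    have := hint2.hasFiniteIntegral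
    rw [hasFiniteIntegral_iff_norm] at this
    refine lt_of_le_of_lt (lintegral_mono (fun t => ?_)) this
    exact ENNReal.ofReal_le_ofReal (le_abs_self _)
  exact ENNReal.mul_lt_top ENNReal.ofReal_lt_top
    (ENNReal.add_lt_top.2 ⟨lt_of_le_of_lt h1 h1', lt_of_le_of_lt h2 h2'⟩)

lemma aux_markov {Ω : Type*} [MeasurableSpace Ω] (μ : Measure Ω) [IsProbabilityMeasure μ]
    (α : Ω → ℝ) (hαmeas : Measurable α) (hval : ∀ᵐ ω ∂μ, 0 ≤ α ω)
    (f : ℝ → ℝ) (hG : ∀ u, ENNReal.ofReal (f u) = μ {ω | u < α ω})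
    (hf0 : ∀ u, 0 ≤ f u)
    {β : ℝ} (hβ : 0 < β) (hint : Integrable (fun ω => α ω ^ (β+1)) μ)
    {x : ℝ} (hx : 0 < x) (hfi : IntegrableOn f (Ioi x)) :
    (∫ u in Ioi x, f u) ≤ (∫ ω, α ω ^ (β+1) ∂μ) * (x ^ (-β) / β) := by
  set M := ∫ ω, α ω ^ (β+1) ∂μ with hMdef
  have hp : (0:ℝ) < β + 1 := by linarith
  have hgnn : 0 ≤ᵐ[μ] fun ω => α ω ^ (β+1) := hval.mono fun ω h => Real.rpow_nonneg h _
  have hM0 : 0 ≤ M := integral_nonneg_of_ae hgnn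
  have hlin : ∫⁻ ω, ENNReal.ofReal (α ω ^ (β+1)) ∂μ = ENNReal.ofReal M :=
    (ofReal_integral_eq_lintegral_ofReal hint hgnn).symm
  have hMar : ∀ u : ℝ, 0 < u → μ {ω | u < α ω} ≤ ENNReal.ofReal (M / u^(β+1)) := by
    intro u hu
    have hup : (0:ℝ) < u ^ (β+1) := Real.rpow_pos_of_pos hu _
    have hsub : {ω | u < α ω} ⊆
        {ω | ENNReal.ofReal (u ^ (β+1)) ≤ ENNReal.ofReal (α ω ^ (β+1))} := by
      intro ω (hω : u < α ω)
      exact ENNReal.ofReal_le_ofReal (Real.rpow_le_rpow hu.le hω.le hp.le)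
    have hmea : AEMeasurable (fun ω => ENNReal.ofReal (α ω ^ (β+1))) μ :=
      (ENNReal.measurable_ofReal.comp
        ((Real.continuous_rpow_const hp.le).measurable.comp hαmeas)).aemeasurable
    calc μ {ω | u < α ω}
        ≤ μ {ω | ENNReal.ofReal (u ^ (β+1)) ≤ ENNReal.ofReal (α ω ^ (β+1))} :=
          measure_mono hsub
    _ ≤ (∫⁻ ω, ENNReal.ofReal (α ω ^ (β+1)) ∂μ) / ENNReal.ofReal (u ^ (β+1)) :=
          meas_ge_le_lintegral_div hmea (by simpa [ENNReal.ofReal_pos] using hup)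
            ENNReal.ofReal_ne_top
    _ = ENNReal.ofReal M / ENNReal.ofReal (u ^ (β+1)) := by rw [hlin]
    _ = ENNReal.ofReal (M / u ^ (β+1)) := (ENNReal.ofReal_div_of_pos hup).symm
  have e1 : ENNReal.ofReal (∫ u in Ioi x, f u) = ∫⁻ u in Ioi x, ENNReal.ofReal (f u) :=
    ofReal_integral_eq_lintegral_ofReal hfi (Eventually.of_forall hf0)
  have e2 : ∫⁻ u in Ioi x, ENNReal.ofReal (f u)
      ≤ ∫⁻ u in Ioi x, ENNReal.ofReal (M * u ^ (-(β+1))) := by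
    refine setLIntegral_mono' measurableSet_Ioi (fun u hu => ?_)
    have hu0 : 0 < u := hx.trans hu
    rw [hG]
    refine (hMar u hu0).trans_eq ?_
    rw [Real.rpow_neg hu0.le, div_eq_mul_inv]
  have hi3 : IntegrableOn (fun u : ℝ => M * u ^ (-(β+1))) (Ioi x) :=
    (integrableOn_Ioi_rpow_of_lt (by linarith) hx).const_mul M
  have e3 : ∫⁻ u in Ioi x, ENNReal.ofReal (M * u ^ (-(β+1)))
      = ENNReal.ofReal (∫ u in Ioi x, M * u ^ (-(β+1))) := by
    refine (ofReal_integral_eq_lintegral_ofReal hi3 ?_).symm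
    refine (ae_restrict_iff' measurableSet_Ioi).2 (ae_of_all _ fun u hu => ?_)
    have hu0 : 0 < u := hx.trans hu
    positivity
  have e4 : ∫ u in Ioi x, M * u ^ (-(β+1)) = M * (x ^ (-β) / β) := by
    rw [MeasureTheory.integral_const_mul, integral_Ioi_rpow_of_lt (by linarith) hx]
    have : -(β+1) + 1 = -β := by ring
    rw [this]
    field_simp
  have : ENNReal.ofReal (∫ u in Ioi x, f u) ≤ ENNReal.ofReal (M * (x ^ (-β) / β)) := by
    rw [e1, ← e4, ← e3]; exact e2
  have hrhs : 0 ≤ M * (x ^ (-β) / β) := by positivity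
  exact (ENNReal.ofReal_le_ofReal_iff hrhs).1 this

/-- If `α` is DGMRD with `γ = lim_{x→∞} e(x)` where `e(x) = m(x)/x`, then `γ = 0` iff
`E[α^(β+1)] < ∞` for every `β > 0`. -/
theorem stmt9 {Ω : Type*} [MeasurableSpace Ω] (μ : Measure Ω) [IsProbabilityMeasure μ]
    (α : Ω → ℝ) (hαmeas : Measurable α)
    (hval : ∀ᵐ ω ∂μ, 0 ≤ α ω)
    (hαint : Integrable α μ)
    (F : ℝ → ℝ)
    (hF : ∀ x : ℝ, F x = (μ {ω | α ω ≤ x}).toReal)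
    (hFbar : ∀ x : ℝ, 0 ≤ x → 0 < 1 - F x)
    (hDGMRD : ∀ x y : ℝ, 0 < x → x ≤ y → mrd F y / y ≤ mrd F x / x)
    (γ : ℝ) (hγ : Tendsto (fun x : ℝ => mrd F x / x) atTop (𝓝 γ))
    :
    γ = 0 ↔ ∀ β : ℝ, 0 < β → Integrable (fun ω => α ω ^ (β + 1)) μ := by
  classical
  obtain ⟨f, hfdef⟩ : ∃ f : ℝ → ℝ, f = fun u => 1 - F u := ⟨_, rfl⟩
  have hFmono : Monotone F := fun a b hab => by
    rw [hF, hF]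
    exact ENNReal.toReal_mono (measure_ne_top μ _)
      (measure_mono fun ω hω => le_trans hω hab)
  have hf_anti : Antitone f := by
    intro a b hab
    rw [hfdef]
    exact sub_le_sub_left (hFmono hab) 1
  have hmeas1 : ∀ u : ℝ, MeasurableSet {ω | α ω ≤ u} := fun u => hαmeas measurableSet_Iic
  have hG : ∀ u, ENNReal.ofReal (f u) = μ {ω | u < α ω} := by
    intro u
    have hc : {ω | u < α ω} = {ω | α ω ≤ u}ᶜ := by ext ω; simp [not_le]
    rw [hc, measure_compl (hmeas1 u) (measure_ne_top μ _), measure_univ]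
    have : f u = 1 - (μ {ω | α ω ≤ u}).toReal := by rw [hfdef]; simp [hF]
    rw [this, ENNReal.ofReal_sub _ ENNReal.toReal_nonneg, ENNReal.ofReal_one,
      ENNReal.ofReal_toReal (measure_ne_top μ _)]
  have hf0 : ∀ u, 0 ≤ f u := fun u => by
    have h1 : F u ≤ 1 := by
      rw [hF]
      have := ENNReal.toReal_mono ENNReal.one_ne_top
        (prob_le_one (μ := μ) (s := {ω | α ω ≤ u}))
      simpa using this
    simp only [hfdef]
    linarith
  have Itail : (∫⁻ t in Ioi (0:ℝ), ENNReal.ofReal (f t)) < ⊤ := by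
    have h1 : ∫⁻ t in Ioi (0:ℝ), ENNReal.ofReal (f t) = ∫⁻ t in Ioi 0, μ {ω | t < α ω} :=
      lintegral_congr fun t => hG t
    rw [h1, ← lintegral_eq_lintegral_meas_lt μ hval hαmeas.aemeasurable]
    exact hαint.lintegral_lt_top
  have hfi : ∀ x : ℝ, 0 ≤ x → IntegrableOn f (Ioi x) := by
    intro x hx
    refine ⟨(hf_anti.measurable).aestronglyMeasurable.restrict, ?_⟩
    rw [hasFiniteIntegral_iff_norm]
    have heq : ∀ t, ENNReal.ofReal ‖f t‖ = ENNReal.ofReal (f t) := fun t => by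
      rw [Real.norm_of_nonneg (hf0 t)]
    simp_rw [heq]
    exact lt_of_le_of_lt (lintegral_mono_set (Ioi_subset_Ioi hx)) Itail
  have hmrd : ∀ x, mrd F x = (∫ u in Ioi x, f u) / f x := by
    intro x; rw [hfdef]; rfl
  have hfpos : ∀ x : ℝ, 0 ≤ x → 0 < f x := by
    intro x hx; rw [hfdef]; exact hFbar x hx
  constructor
  · -- γ = 0 → all moments
    intro hγ0 β hβ
    rw [hγ0] at hγ
    obtain ⟨k, hk⟩ : ∃ k : ℕ, k = ⌈β⌉₊ + 2 := ⟨_, rfl⟩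
    have hβk : β < k := by
      have := Nat.le_ceil β
      have hkk : (k:ℝ) = (⌈β⌉₊ : ℝ) + 2 := by rw [hk]; push_cast; ring
      linarith
    obtain ⟨ε, hε⟩ : ∃ ε : ℝ, ε = (1/2)^(k+1) := ⟨_, rfl⟩
    have hεpos : 0 < ε := by rw [hε]; positivity
    have hev : ∀ᶠ x in atTop, mrd F x / x < ε := hγ.eventually_lt_const hεpos
    obtain ⟨x₁, hx₁⟩ := eventually_atTop.1 hev
    obtain ⟨x₀, hx₀def⟩ : ∃ x₀ : ℝ, x₀ = max x₁ 1 := ⟨_, rfl⟩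
    have hx₀1 : (1:ℝ) ≤ x₀ := hx₀def ▸ le_max_right _ _
    have hx₀x₁ : x₁ ≤ x₀ := hx₀def ▸ le_max_left _ _
    have hx₀ : (0:ℝ) < x₀ := by linarith
    have hsmall : ∀ z, x₀ ≤ z → (∫ u in Ioi z, f u) ≤ ε * z * f z := by
      intro z hz
      have hz1 : (1:ℝ) ≤ z := le_trans hx₀1 hz
      have hz0 : (0:ℝ) < z := by linarith
      have hfz : 0 < f z := hfpos z (by linarith)
      have h := (hx₁ z (le_trans hx₀x₁ hz)).le
      rw [hmrd, div_div, div_le_iff₀ (by positivity)] at h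
      nlinarith [h]
    have hstep' : ∀ z, x₀ ≤ z → (∫ u in Ioi (2*z), f u) ≤ (1/2)^k * ∫ u in Ioi z, f u := by
      intro z hz
      have h := aux_step hf_anti hf0 (fun w hw => hfi w (le_trans hx₀.le hw)) hx₀ hεpos
        hsmall z hz
      calc (∫ u in Ioi (2*z), f u) ≤ (2*ε) * ∫ u in Ioi z, f u := h
      _ = (1/2)^k * ∫ u in Ioi z, f u := by rw [hε, pow_succ]; ring
    have hfb := aux_fdecay hf_anti hf0 (fun w hw => hfi w (le_trans hx₀.le hw)) hx₀ hstep'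
    have hTnn : 0 ≤ ∫ u in Ioi x₀, f u := aux_T_nonneg hf0
    exact aux_moment μ α hαmeas hval f hG hβ hβk (c := 2*x₀) (by positivity)
      (C := 2 * (4*x₀)^k * ∫ u in Ioi x₀, f u) (by positivity) hfb
  · -- all moments → γ = 0
    intro hmom
    by_contra hγ0
    have he_nn : ∀ᶠ x in atTop, 0 ≤ mrd F x / x := by
      filter_upwards [eventually_ge_atTop (1:ℝ)] with z hz
      have hT := aux_T_nonneg (f := f) (x := z) hf0
      have hfz : 0 < f z := hfpos z (by linarith)
      rw [hmrd]
      positivity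
    have hγnn : 0 ≤ γ := ge_of_tendsto hγ he_nn
    have hγpos : 0 < γ := lt_of_le_of_ne hγnn (Ne.symm hγ0)
    have hlow : ∀ z : ℝ, 0 < z → γ * z * f z ≤ ∫ u in Ioi z, f u := by
      intro z hz
      have hfz : 0 < f z := hfpos z hz.le
      have h : γ ≤ mrd F z / z := by
        refine le_of_tendsto hγ ?_
        filter_upwards [eventually_ge_atTop z] with y hy
        exact hDGMRD z y hz hy
      rw [hmrd, div_div, le_div_iff₀ (by positivity)] at h
      nlinarith [h]
    obtain ⟨c, hcdef⟩ : ∃ c : ℝ, c = 1 + γ/2 := ⟨_, rfl⟩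
    have hc1 : 1 < c := by rw [hcdef]; linarith
    have hc0 : (0:ℝ) < c := by linarith
    have hstep : ∀ z, 1 ≤ z → (∫ u in Ioi z, f u) ≤ 2 * ∫ u in Ioi (c*z), f u := by
      intro z hz
      have hz0 : (0:ℝ) < z := by linarith
      have hzc : z ≤ c*z := le_mul_of_one_le_left hz0.le hc1.le
      have hsplit := aux_split (hfi z (by linarith)) hzc
      have hle := aux_Ioc_le hf_anti hzc ((hfi z (by linarith)).mono_set Ioc_subset_Ioi_self)
      have hlz := hlow z hz0
      have h1 : (c*z - z) * f z = (γ/2) * (z * f z) := by rw [hcdef]; ring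
      rw [h1] at hle
      linarith [hsplit, hle, hlz]
    have hiter := aux_lower hc1.le hstep
    have hT1 : 0 < ∫ u in Ioi (1:ℝ), f u := by
      have hf1 : 0 < f 1 := hfpos 1 (by norm_num)
      have := hlow 1 one_pos
      nlinarith
    obtain ⟨β, hβdef⟩ : ∃ β : ℝ, β = Real.logb c 2 + 1 := ⟨_, rfl⟩
    have hlogb : 0 < Real.logb c 2 := Real.logb_pos hc1 one_lt_two
    have hβpos : 0 < β := by rw [hβdef]; linarith
    have hcβ : c ^ β = 2 * c := by
      rw [hβdef, Real.rpow_add hc0, Real.rpow_one,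
        Real.rpow_logb hc0 (ne_of_gt hc1) two_pos]
    have hMint := hmom β hβpos
    obtain ⟨M, hMdef⟩ : ∃ M : ℝ, M = ∫ ω, α ω ^ (β+1) ∂μ := ⟨_, rfl⟩
    have hM0 : 0 ≤ M := hMdef ▸
      integral_nonneg_of_ae (hval.mono fun ω h => Real.rpow_nonneg h _)
    have hbound : ∀ n : ℕ, (1/2)^n * (∫ u in Ioi (1:ℝ), f u) ≤ M * ((c^n)^(-β)/β) := by
      intro n
      have hcn : (0:ℝ) < c^n := pow_pos hc0 n
      exact (hiter n).trans (hMdef ▸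
        (aux_markov μ α hαmeas hval f hG hf0 hβpos hMint hcn (hfi _ hcn.le)))
    have hr : ∀ n : ℕ, ((c:ℝ)^n) ^ (-β) = (c ^ (-β))^n := by
      intro n
      rw [← Real.rpow_natCast c n, ← Real.rpow_mul hc0.le, mul_comm,
        Real.rpow_mul hc0.le, Real.rpow_natCast]
    have hfinal : ∀ n : ℕ, (∫ u in Ioi (1:ℝ), f u) ≤ (M/β) * (2*c^(-β))^n := by
      intro n
      have h := hbound n
      rw [hr n] at h
      calc (∫ u in Ioi (1:ℝ), f u)
          = (2:ℝ)^n * ((1/2)^n * ∫ u in Ioi (1:ℝ), f u) := by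
            rw [← mul_assoc, ← mul_pow]; norm_num
      _ ≤ (2:ℝ)^n * (M * ((c^(-β))^n / β)) := by
            exact mul_le_mul_of_nonneg_left h (by positivity)
      _ = (M/β) * (2*c^(-β))^n := by rw [mul_pow]; ring
    have hcβ2 : (2:ℝ) < c ^ β := by rw [hcβ]; linarith
    have hlt1 : 2 * c^(-β) < 1 := by
      rw [Real.rpow_neg hc0.le]
      have hpos : (0:ℝ) < c ^ β := Real.rpow_pos_of_pos hc0 β
      rw [← div_eq_mul_inv]
      exact (div_lt_one hpos).2 hcβ2
    have htend : Tendsto (fun n : ℕ => (M/β) * (2*c^(-β))^n) atTop (𝓝 0) := by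
      have h0 : (0:ℝ) ≤ 2 * c^(-β) := by positivity
      have := (tendsto_pow_atTop_nhds_zero_of_lt_one h0 hlt1).const_mul (M/β)
      simpa using this
    obtain ⟨n, hn⟩ := (htend.eventually_lt_const hT1).exists
    exact absurd (hfinal n) (not_le.2 hn)
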